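/- arXiv:0903.0371 — 3 statements merged into one kernel-verified Lean document; each statement's English description precedes it below -/
import Mathlib

section
/- Let $R$ be a commutative ring, $G$ and $H$ finite groups, $U$ a finite $(H,G)$-biset, and $M$ a functor from $\mathcal{C}_U$ to $R\text{-}\mathsf{Mod}$. Then the direct sum $\Sigma(M) = \bigoplus_{u \in U} M(u)$, with actions $h \cdot m = M(h,1)(m)$ and $m \cdot g = M(1,g^{-1})(m)$ for $m \in M(u)$, is an $(RH,RG)$-bimodule, and there is an isomorphism of $(RH,RG)$-bimodules $\Sigma(M) \cong \bigoplus_{u \in [H\backslash U/G]} \mathrm{Ind}_{A(u)}^{H \times G} M(u)$, where $[H\backslash U/G]$ is a set of orbit representatives and $A(u) = \{(h,g) \in H \times G \mid hu = ug\}$. -/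
open CategoryTheory MulOpposite DirectSum

/-- An object wrapper: the objects of the category associated to an `(H,G)`-biset `U`
are the elements of `U`. -/
structure BisetCat (H G U : Type*) where
  x : U

variable {H G U : Type*} [Group H] [Group G]
  [MulAction H U] [MulAction Gᵐᵒᵖ U] [SMulCommClass H Gᵐᵒᵖ U]

/-- The category associated to an `(H,G)`-biset `U`: objects are elements of `U`,
and morphisms `u ⟶ v` are pairs `(h,g)` with `h • u = v • g`; composition of
`(h,g) : u ⟶ v` and `(h',g') : v ⟶ w` is `(h'*h, g'*g)` and the identity is `(1,1)`. -/
instance bisetCategory : Category (BisetCat H G U) where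
  Hom u v := {p : H × G // p.1 • u.x = op p.2 • v.x}
  id u := ⟨(1, 1), by simp⟩
  comp {u v w} f g := ⟨(g.1.1 * f.1.1, g.1.2 * f.1.2), by
    have hf := f.2; have hg := g.2
    calc (g.1.1 * f.1.1) • u.x = g.1.1 • (f.1.1 • u.x) := by rw [mul_smul]
    _ = g.1.1 • (op f.1.2 • v.x) := by rw [hf]
    _ = op f.1.2 • (g.1.1 • v.x) := by rw [smul_comm]
    _ = op f.1.2 • (op g.1.2 • w.x) := by rw [hg]
    _ = op (g.1.2 * f.1.2) • w.x := by rw [← mul_smul, ← op_mul]⟩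
  id_comp f := Subtype.ext (by simp [Prod.ext_iff])
  comp_id f := Subtype.ext (by simp [Prod.ext_iff])
  assoc f g h := Subtype.ext (by simp [Prod.ext_iff, mul_assoc])


/-- The stabilizer subgroup `A(u) = {(h,g) | h • u = u • g}` of `H × G`. -/
def Apt (H G : Type*) {U : Type*} [Group H] [Group G]
    [MulAction H U] [MulAction Gᵐᵒᵖ U] [SMulCommClass H Gᵐᵒᵖ U] (u : U) :
    Subgroup (H × G) where
  carrier := {p : H × G | p.1 • u = op p.2 • u}
  one_mem' := by simp
  mul_mem' := by
    intro a b ha hb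
    show (a.1 * b.1) • u = op (a.2 * b.2) • u
    calc (a.1 * b.1) • u = a.1 • (b.1 • u) := mul_smul _ _ _
    _ = a.1 • (op b.2 • u) := by rw [hb]
    _ = op b.2 • (a.1 • u) := smul_comm _ _ _
    _ = op b.2 • (op a.2 • u) := by rw [ha]
    _ = op (a.2 * b.2) • u := by rw [← mul_smul, ← op_mul]
  inv_mem' := by
    intro a ha
    show a.1⁻¹ • u = op (a.2⁻¹) • u
    have h1 : u = a.1⁻¹ • op a.2 • u := by
      rw [← ha, inv_smul_smul]
    calc a.1⁻¹ • u = a.1⁻¹ • (op a.2⁻¹ • op a.2 • u) := by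
          rw [MulOpposite.op_inv, inv_smul_smul]
    _ = op a.2⁻¹ • (a.1⁻¹ • (op a.2 • u)) := by
          rw [smul_comm]
    _ = op a.2⁻¹ • u := by rw [← h1]

open TensorProduct

/-- The relations defining the induced module `R Γ ⊗_{R X} M`: the submodule of
`R Γ ⊗_R M` spanned by the elements `(a x) ⊗ m - a ⊗ (x • m)` for `x ∈ X`. -/
noncomputable def indRel (R Γ : Type*) [CommRing R] [Group Γ] (X : Subgroup Γ)
    (M : Type*) [AddCommGroup M] [Module R M] (ρ : X →* Module.End R M) :
    Submodule R ((MonoidAlgebra R Γ) ⊗[R] M) :=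
  Submodule.span R {z | ∃ (γ : Γ) (x : X) (m : M),
    z = MonoidAlgebra.single (γ * (x : Γ)) (1 : R) ⊗ₜ[R] m -
        MonoidAlgebra.single γ (1 : R) ⊗ₜ[R] (ρ x m)}

/-- The induced module `Ind_X^Γ M = R Γ ⊗_{R X} M`, realized as the quotient of
`R Γ ⊗_R M` by the induction relations. -/
def Ind (R Γ : Type*) [CommRing R] [Group Γ] (X : Subgroup Γ)
    (M : Type*) [AddCommGroup M] [Module R M] (ρ : X →* Module.End R M) :
    Type _ :=
  ((MonoidAlgebra R Γ) ⊗[R] M) ⧸ indRel R Γ X M ρ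

noncomputable instance (R Γ : Type*) [CommRing R] [Group Γ] (X : Subgroup Γ)
    (M : Type*) [AddCommGroup M] [Module R M] (ρ : X →* Module.End R M) :
    AddCommGroup (Ind R Γ X M ρ) :=
  inferInstanceAs (AddCommGroup (((MonoidAlgebra R Γ) ⊗[R] M) ⧸ indRel R Γ X M ρ))

noncomputable instance (R Γ : Type*) [CommRing R] [Group Γ] (X : Subgroup Γ)
    (M : Type*) [AddCommGroup M] [Module R M] (ρ : X →* Module.End R M) :
    Module R (Ind R Γ X M ρ) :=
  inferInstanceAs (Module R (((MonoidAlgebra R Γ) ⊗[R] M) ⧸ indRel R Γ X M ρ))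

/-- The canonical generator `(c γ) ⊗ m` of the induced module. -/
noncomputable def Ind.gen (R Γ : Type*) [CommRing R] [Group Γ] (X : Subgroup Γ)
    (M : Type*) [AddCommGroup M] [Module R M] (ρ : X →* Module.End R M)
    (γ : Γ) (c : R) (m : M) : Ind R Γ X M ρ :=
  Submodule.Quotient.mk (MonoidAlgebra.single γ c ⊗ₜ[R] m)

universe u

variable {R : Type u} [CommRing R]

/-- The representation of the stabilizer group `A(u)` on `M(u)`, for a functor `M` from
the biset category to `R`-modules. -/
noncomputable def stabRep {H G U : Type u} [Group H] [Group G]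
    [MulAction H U] [MulAction Gᵐᵒᵖ U] [SMulCommClass H Gᵐᵒᵖ U]
    (M : BisetCat H G U ⥤ ModuleCat.{u} R) (u : U) :
    Apt H G u →* Module.End R (M.obj ⟨u⟩) where
  toFun p := (M.map (⟨(p : H × G), p.2⟩ : (⟨u⟩ : BisetCat H G U) ⟶ ⟨u⟩)).hom
  map_one' := by
    dsimp only
    have h : (⟨((1 : Apt H G u) : H × G), (1 : Apt H G u).2⟩ :
        (⟨u⟩ : BisetCat H G U) ⟶ ⟨u⟩) = 𝟙 (⟨u⟩ : BisetCat H G U) := rfl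
    exact congrArg ModuleCat.Hom.hom ((congrArg M.map h).trans (M.map_id _))
  map_mul' p q := by
    have h : (⟨((p * q : Apt H G u) : H × G), (p * q).2⟩ :
        (⟨u⟩ : BisetCat H G U) ⟶ ⟨u⟩) =
        ((⟨(q : H × G), q.2⟩ : (⟨u⟩ : BisetCat H G U) ⟶ ⟨u⟩) ≫
          (⟨(p : H × G), p.2⟩ : (⟨u⟩ : BisetCat H G U) ⟶ ⟨u⟩) :
            (⟨u⟩ : BisetCat H G U) ⟶ ⟨u⟩) := by rfl
    dsimp only
    exact congrArg ModuleCat.Hom.hom ((congrArg M.map h).trans (M.map_comp _ _))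

theorem smul_aux {H G U : Type u} [Group H] [Group G]
    [MulAction H U] [MulAction Gᵐᵒᵖ U] [SMulCommClass H Gᵐᵒᵖ U] (h : H) (g : G) (u : U) :
    h • u = op g • ((op g⁻¹ : Gᵐᵒᵖ) • h • u) := by
  rw [MulOpposite.op_inv, smul_inv_smul]

section ActAux
variable {H G U : Type u} [Group H] [Group G]
  [MulAction H U] [MulAction Gᵐᵒᵖ U] [SMulCommClass H Gᵐᵒᵖ U]

/-- The left action of `H × G` on `U` given by `(h,g) • u = h • u • g⁻¹`. -/
def pact (p : H × G) (u : U) : U := (op p.2⁻¹ : Gᵐᵒᵖ) • p.1 • u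

omit [SMulCommClass H Gᵐᵒᵖ U] in
lemma pact_one (u : U) : pact (1 : H × G) u = u := by simp [pact]

lemma pact_mul (p q : H × G) (u : U) : pact (p * q) u = pact p (pact q u) := by
  simp only [pact, Prod.fst_mul, Prod.snd_mul, mul_inv_rev, op_mul, mul_smul]
  rw [smul_comm p.1 (op q.2⁻¹ : Gᵐᵒᵖ)]

lemma pact_inv_eq {p : H × G} {u v : U} (h : pact p u = v) : pact p⁻¹ v = u := by
  rw [← h, ← pact_mul, inv_mul_cancel, pact_one]

lemma mem_apt_iff (x : H × G) (u : U) : x ∈ Apt H G u ↔ pact x u = u := by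
  show x.1 • u = op x.2 • u ↔ _
  rw [pact, MulOpposite.op_inv, inv_smul_eq_iff, eq_comm]

/-- The morphism `⟨u⟩ ⟶ ⟨v⟩` given by `p` when `pact p u = v`. -/
def homOf {u v : U} (p : H × G) (hv : pact p u = v) :
    (⟨u⟩ : BisetCat H G U) ⟶ ⟨v⟩ :=
  ⟨p, by subst hv
         show p.1 • u = op p.2 • ((op p.2⁻¹ : Gᵐᵒᵖ) • p.1 • u)
         rw [MulOpposite.op_inv, smul_inv_smul]⟩

@[simp] lemma homOf_val {u v : U} (p : H × G) (hv : pact p u = v) :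
    (homOf p hv).1 = p := rfl

lemma homOf_comp {u v w : U} (p q : H × G) (hq : pact q u = v) (hp : pact p v = w) :
    homOf q hq ≫ homOf p hp = homOf (p * q) (by rw [pact_mul, hq, hp]) := rfl

lemma homOf_one (u : U) : homOf (1 : H × G) (pact_one u) = 𝟙 (⟨u⟩ : BisetCat H G U) := rfl

end ActAux
section RhoS
variable {R : Type u} [CommRing R] {H G U : Type u} [Group H] [Group G]
  [MulAction H U] [MulAction Gᵐᵒᵖ U] [SMulCommClass H Gᵐᵒᵖ U] [DecidableEq U]

lemma lof_map_congr (M : BisetCat H G U ⥤ ModuleCat.{u} R) {u v v' : U}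
    (f : (⟨u⟩ : BisetCat H G U) ⟶ ⟨v⟩) (f' : (⟨u⟩ : BisetCat H G U) ⟶ ⟨v'⟩)
    (hv : v = v') (hf : (f.1 : H × G) = f'.1) (m : M.obj ⟨u⟩) :
    DirectSum.lof R U (fun u => M.obj ⟨u⟩) v (M.map f m) =
    DirectSum.lof R U (fun u => M.obj ⟨u⟩) v' (M.map f' m) := by
  subst hv
  obtain rfl : f = f' := Subtype.ext hf
  rfl

/-- The `H × G` representation on `⨁ u, M(u)`. -/
noncomputable def rhoS (M : BisetCat H G U ⥤ ModuleCat.{u} R) :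
    (H × G) →* Module.End R (⨁ u : U, M.obj ⟨u⟩) where
  toFun p := DirectSum.toModule R U _ fun u =>
    (DirectSum.lof R U (fun u => M.obj ⟨u⟩) (pact p u)).comp
      (ModuleCat.Hom.hom (M.map (homOf p rfl)) : M.obj ⟨u⟩ →ₗ[R] M.obj ⟨pact p u⟩)
  map_one' := by
    apply DirectSum.linearMap_ext
    intro u
    refine LinearMap.ext fun m => ?_
    simp only [LinearMap.comp_apply, DirectSum.toModule_lof, Module.End.one_apply]
    exact (lof_map_congr M (homOf 1 rfl) (homOf 1 (pact_one u)) (pact_one u) rfl m).trans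
      (by rw [homOf_one, M.map_id]; rfl)
  map_mul' p q := by
    apply DirectSum.linearMap_ext
    intro u
    refine LinearMap.ext fun m => ?_
    simp only [LinearMap.comp_apply, DirectSum.toModule_lof, Module.End.mul_apply, DirectSum.toModule_lof, LinearMap.comp_apply]
    refine (lof_map_congr M (homOf (p*q) rfl)
      (homOf (p*q) (by rw [pact_mul])) (pact_mul p q u) rfl m).trans ?_
    rw [← homOf_comp p q rfl rfl, M.map_comp]
    simp

lemma rhoS_lof (M : BisetCat H G U ⥤ ModuleCat.{u} R) (p : H × G) (u : U) (m : M.obj ⟨u⟩) :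
    rhoS M p (DirectSum.lof R U (fun u => M.obj ⟨u⟩) u m) =
      DirectSum.lof R U (fun u => M.obj ⟨u⟩) (pact p u) (M.map (homOf p rfl) m) := by
  simp only [rhoS, MonoidHom.coe_mk, OneHom.coe_mk]
  rw [DirectSum.toModule_lof]
  rfl

end RhoS
section IndAux
variable (R : Type u) [CommRing R] {Γ : Type u} [Group Γ] (X : Subgroup Γ)
  (N : Type u) [AddCommGroup N] [Module R N] (ρ : X →* Module.End R N)

noncomputable def genMap (γ : Γ) : N →ₗ[R] Ind R Γ X N ρ :=
  (indRel R Γ X N ρ).mkQ.comp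
    ((TensorProduct.mk R (MonoidAlgebra R Γ) N) (MonoidAlgebra.single γ 1))

lemma genMap_apply (γ : Γ) (n : N) :
    genMap R X N ρ γ n = Ind.gen R Γ X N ρ γ 1 n := rfl

lemma single_eq_smul (γ : Γ) (c : R) :
    MonoidAlgebra.single γ c = c • MonoidAlgebra.single γ (1 : R) := by
  rw [MonoidAlgebra.smul_single', mul_one]

lemma gen_smul (γ : Γ) (c : R) (n : N) :
    Ind.gen R Γ X N ρ γ c n = c • Ind.gen R Γ X N ρ γ 1 n := by
  show (Submodule.Quotient.mk _ : (MonoidAlgebra R Γ ⊗[R] N) ⧸ indRel R Γ X N ρ) =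
    c • (Submodule.Quotient.mk _ : (MonoidAlgebra R Γ ⊗[R] N) ⧸ indRel R Γ X N ρ)
  rw [← Submodule.Quotient.mk_smul]
  congr 1
  rw [TensorProduct.smul_tmul', ← single_eq_smul]

lemma gen_rel (γ : Γ) (x : X) (c : R) (n : N) :
    Ind.gen R Γ X N ρ (γ * x) c n = Ind.gen R Γ X N ρ γ c (ρ x n) := by
  show Submodule.Quotient.mk _ = Submodule.Quotient.mk _
  rw [Submodule.Quotient.eq]
  have h0 : (MonoidAlgebra.single (γ * (x:Γ)) (1:R) ⊗ₜ[R] n -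
      MonoidAlgebra.single γ (1:R) ⊗ₜ[R] (ρ x n)) ∈ indRel R Γ X N ρ :=
    Submodule.subset_span ⟨γ, x, n, rfl⟩
  have := Submodule.smul_mem _ c h0
  rw [smul_sub, TensorProduct.smul_tmul', TensorProduct.smul_tmul',
    ← single_eq_smul, ← single_eq_smul] at this
  exact this

noncomputable def indT (p : Γ) :
    (MonoidAlgebra R Γ ⊗[R] N) →ₗ[R] (MonoidAlgebra R Γ ⊗[R] N) :=
  TensorProduct.map (LinearMap.mulLeft R (MonoidAlgebra.single p 1)) LinearMap.id

lemma indT_rel (p : Γ) :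
    indRel R Γ X N ρ ≤ (indRel R Γ X N ρ).comap (indT R N p) := by
  rw [indRel, Submodule.span_le]
  rintro z ⟨γ, x, n, rfl⟩
  rw [SetLike.mem_coe, Submodule.mem_comap, map_sub, indT, TensorProduct.map_tmul,
    TensorProduct.map_tmul, LinearMap.mulLeft_apply, LinearMap.mulLeft_apply,
    LinearMap.id_apply, LinearMap.id_apply, MonoidAlgebra.single_mul_single,
    MonoidAlgebra.single_mul_single, one_mul, ← mul_assoc]
  exact Submodule.subset_span ⟨p * γ, x, n, rfl⟩

lemma indT_one : indT R N (1 : Γ) = LinearMap.id := by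
  rw [indT, ← MonoidAlgebra.one_def, LinearMap.mulLeft_one, TensorProduct.map_id]

lemma indT_mul (p q : Γ) :
    indT R N (p * q) = (indT R N p).comp (indT R N (q : Γ)) := by
  refine TensorProduct.ext' fun a n => ?_
  simp only [indT, TensorProduct.map_tmul, LinearMap.mulLeft_apply, LinearMap.id_apply,
    LinearMap.comp_apply]
  rw [← mul_assoc, MonoidAlgebra.single_mul_single, one_mul]

noncomputable def rhoI : Γ →* Module.End R (Ind R Γ X N ρ) where
  toFun p := Submodule.mapQ (indRel R Γ X N ρ) (indRel R Γ X N ρ) (indT R N p) (indT_rel R X N ρ p)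
  map_one' := by
    apply Submodule.linearMap_qext
    refine LinearMap.ext fun t => ?_
    show Submodule.mapQ (indRel R Γ X N ρ) (indRel R Γ X N ρ) (indT R N 1) (indT_rel R X N ρ 1) (Submodule.Quotient.mk t) =
      (Submodule.Quotient.mk t : (MonoidAlgebra R Γ ⊗[R] N) ⧸ indRel R Γ X N ρ)
    rw [Submodule.mapQ_apply, indT_one, LinearMap.id_apply]
  map_mul' p q := by
    apply Submodule.linearMap_qext
    refine LinearMap.ext fun t => ?_
    have h1 : ∀ (r : Γ) (z : MonoidAlgebra R Γ ⊗[R] N),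
        Submodule.mapQ (indRel R Γ X N ρ) (indRel R Γ X N ρ) (indT R N r)
          (indT_rel R X N ρ r) (Submodule.Quotient.mk z) =
          Submodule.Quotient.mk (indT R N r z) :=
      fun r z => Submodule.mapQ_apply _ _ _ z
    show Submodule.mapQ (indRel R Γ X N ρ) (indRel R Γ X N ρ) (indT R N (p * q)) (indT_rel R X N ρ (p * q)) (Submodule.Quotient.mk t) =
      Submodule.mapQ (indRel R Γ X N ρ) (indRel R Γ X N ρ) (indT R N p) (indT_rel R X N ρ p)
        (Submodule.mapQ (indRel R Γ X N ρ) (indRel R Γ X N ρ) (indT R N q) (indT_rel R X N ρ q)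
          (Submodule.Quotient.mk t : (MonoidAlgebra R Γ ⊗[R] N) ⧸ indRel R Γ X N ρ))
    refine (h1 (p * q) t).trans ?_
    rw [indT_mul, LinearMap.comp_apply]
    exact ((h1 p (indT R N q t)).symm).trans
      (congrArg _ (h1 q t).symm)

lemma rhoI_gen (p γ : Γ) (c : R) (n : N) :
    rhoI R X N ρ p (Ind.gen R Γ X N ρ γ c n) = Ind.gen R Γ X N ρ (p * γ) c n := by
  simp only [rhoI, MonoidHom.coe_mk, OneHom.coe_mk]
  unfold Ind.gen
  have h1 := Submodule.mapQ_apply (indRel R Γ X N ρ) (q := indRel R Γ X N ρ)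
    (indT R N p) (h := indT_rel R X N ρ p) (MonoidAlgebra.single γ c ⊗ₜ[R] n)
  simp only [indT] at h1
  rw [TensorProduct.map_tmul, LinearMap.mulLeft_apply, LinearMap.id_apply,
    MonoidAlgebra.single_mul_single, one_mul] at h1
  exact h1

end IndAux
section RhoD
variable {R : Type u} [CommRing R] {ι : Type u} [DecidableEq ι]
  (F : ι → Type u) [∀ i, AddCommGroup (F i)] [∀ i, Module R (F i)]
  {Γ : Type u} [Group Γ]

noncomputable def rhoD (ρ : ∀ i, Γ →* Module.End R (F i)) :
    Γ →* Module.End R (⨁ i, F i) where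
  toFun p := DirectSum.toModule R ι _ fun i => (DirectSum.lof R ι F i).comp (ρ i p)
  map_one' := by
    apply DirectSum.linearMap_ext
    intro i; refine LinearMap.ext fun m => ?_
    simp only [LinearMap.comp_apply, DirectSum.toModule_lof, map_one,
      Module.End.one_apply]
  map_mul' p q := by
    apply DirectSum.linearMap_ext
    intro i; refine LinearMap.ext fun m => ?_
    simp only [LinearMap.comp_apply, DirectSum.toModule_lof, map_mul,
      Module.End.mul_apply]

lemma rhoD_lof (ρ : ∀ i, Γ →* Module.End R (F i)) (p : Γ) (i : ι) (x : F i) :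
    rhoD F ρ p (DirectSum.lof R ι F i x) = DirectSum.lof R ι F i (ρ i p x) := by
  simp only [rhoD, MonoidHom.coe_mk, OneHom.coe_mk]
  rw [DirectSum.toModule_lof]
  rfl

end RhoD

section PhiPsi
variable {R : Type u} [CommRing R] {H G U : Type u} [Group H] [Group G]
  [MulAction H U] [MulAction Gᵐᵒᵖ U] [SMulCommClass H Gᵐᵒᵖ U] [DecidableEq U]
  (M : BisetCat H G U ⥤ ModuleCat.{u} R)

lemma hom_pact {u v : U} (f : (⟨u⟩ : BisetCat H G U) ⟶ ⟨v⟩) : pact f.1 u = v := by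
  have h2 := f.2
  rw [pact, h2, MulOpposite.op_inv, inv_smul_smul]

lemma stabRep_apply (r : U) (x : Apt H G r) (m : M.obj ⟨r⟩) :
    stabRep M r x m = M.map (homOf (x : H × G) ((mem_apt_iff _ _).mp x.2)) m := rfl

/-- Main well-definedness lemma: generators with compatible data agree. -/
lemma genEq {u r : U} (f f' : (⟨u⟩ : BisetCat H G U) ⟶ ⟨r⟩) (γ γ' : H × G) (c : R)
    (hγ : γ * f.1 = γ' * f'.1) (m : M.obj ⟨u⟩) :
    Ind.gen R (H × G) (Apt H G r) (M.obj ⟨r⟩) (stabRep M r) γ c (M.map f m) =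
    Ind.gen R (H × G) (Apt H G r) (M.obj ⟨r⟩) (stabRep M r) γ' c (M.map f' m) := by
  have hx : (f'.1 * (f.1)⁻¹ : H × G) ∈ Apt H G r := by
    rw [mem_apt_iff, pact_mul, pact_inv_eq (hom_pact f), hom_pact f']
  set x : Apt H G r := ⟨f'.1 * (f.1)⁻¹, hx⟩ with hxdef
  have hγ2 : γ = γ' * (x : H × G) := by
    have : γ = γ' * f'.1 * (f.1)⁻¹ := by rw [← hγ, mul_inv_cancel_right]
    rw [this, hxdef, mul_assoc]
  rw [hγ2, gen_rel]
  congr 1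
  have hcomp : f ≫ (⟨(x : H × G), x.2⟩ : (⟨r⟩ : BisetCat H G U) ⟶ ⟨r⟩) = f' := by
    apply Subtype.ext
    show ((x : H × G).1 * f.1.1, (x : H × G).2 * f.1.2) = f'.1
    show (x : H × G) * f.1 = f'.1
    rw [hxdef]
    exact inv_mul_cancel_right _ _
  calc stabRep M r x (M.map f m)
      = M.map (f ≫ (⟨(x : H × G), x.2⟩ : (⟨r⟩ : BisetCat H G U) ⟶ ⟨r⟩)) m := by
        rw [M.map_comp]; rfl
    _ = M.map f' m := by rw [hcomp]

variable (reps : Set U) [DecidableEq reps]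

lemma psiGenEq {u : U} {r r' : U} (hr : r ∈ reps) (hr' : r' ∈ reps)
    (hrr : r = r') (f : (⟨u⟩ : BisetCat H G U) ⟶ ⟨r⟩)
    (f' : (⟨u⟩ : BisetCat H G U) ⟶ ⟨r'⟩) (γ γ' : H × G) (c : R)
    (hγ : γ * f.1 = γ' * f'.1) (m : M.obj ⟨u⟩) :
    DirectSum.lof R reps
      (fun r => Ind R (H × G) (Apt H G (r : U)) (M.obj ⟨(r : U)⟩) (stabRep M (r : U)))
      ⟨r, hr⟩ (Ind.gen R (H × G) (Apt H G r) (M.obj ⟨r⟩) (stabRep M r) γ c (M.map f m)) =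
    DirectSum.lof R reps
      (fun r => Ind R (H × G) (Apt H G (r : U)) (M.obj ⟨(r : U)⟩) (stabRep M (r : U)))
      ⟨r', hr'⟩ (Ind.gen R (H × G) (Apt H G r') (M.obj ⟨r'⟩) (stabRep M r') γ' c (M.map f' m)) := by
  subst hrr
  exact congrArg _ (genEq M f f' γ γ' c hγ m)

/-- The bilinear-to-`Σ` map underlying `Φ` at a point `r`. -/
noncomputable def phiT (r : U) :
    (MonoidAlgebra R (H × G)) ⊗[R] (M.obj ⟨r⟩) →ₗ[R] ⨁ u : U, M.obj ⟨u⟩ :=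
  TensorProduct.lift ((Finsupp.lsum R fun p : H × G =>
    LinearMap.toSpanSingleton R (M.obj ⟨r⟩ →ₗ[R] ⨁ u : U, M.obj ⟨u⟩)
      ((DirectSum.lof R U (fun u => M.obj ⟨u⟩) (pact p r)).comp
        (ModuleCat.Hom.hom (M.map (homOf p rfl)) : M.obj ⟨r⟩ →ₗ[R] M.obj ⟨pact p r⟩))) ∘ₗ
        (MonoidAlgebra.coeffLinearEquiv R).toLinearMap :
    MonoidAlgebra R (H × G) →ₗ[R] (M.obj ⟨r⟩ →ₗ[R] ⨁ u : U, M.obj ⟨u⟩))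

lemma phiT_single (r : U) (p : H × G) (c : R) (m : M.obj ⟨r⟩) :
    phiT M r (MonoidAlgebra.single p c ⊗ₜ[R] m) =
      c • DirectSum.lof R U (fun u => M.obj ⟨u⟩) (pact p r) (M.map (homOf p rfl) m) := by
  rw [phiT, TensorProduct.lift.tmul, LinearMap.comp_apply, LinearEquiv.coe_coe,
    MonoidAlgebra.coeffLinearEquiv_apply, MonoidAlgebra.coeff_single]
  erw [Finsupp.lsum_single]
  rw [LinearMap.toSpanSingleton_apply]
  rfl

lemma phiT_ker (r : U) :
    indRel R (H × G) (Apt H G r) (M.obj ⟨r⟩) (stabRep M r) ≤ LinearMap.ker (phiT M r) := by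
  rw [indRel, Submodule.span_le]
  rintro z ⟨γ, x, n, rfl⟩
  rw [SetLike.mem_coe, LinearMap.mem_ker, map_sub, phiT_single, phiT_single,
    one_smul, one_smul, sub_eq_zero, stabRep_apply,
    show M.map (homOf γ rfl) (M.map (homOf ((x : H × G)) ((mem_apt_iff _ _).mp x.2)) n)
      = M.map (homOf ((x : H × G)) ((mem_apt_iff _ _).mp x.2) ≫ homOf γ rfl) n by
        rw [M.map_comp]; rfl,
    homOf_comp]
  have hv : pact (γ * (x : H × G)) r = pact γ r := by
    rw [pact_mul, (mem_apt_iff _ _).mp x.2]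
  exact lof_map_congr M _ _ hv rfl n

/-- The component of `Φ` at `r`. -/
noncomputable def PhiComp (r : U) :
    Ind R (H × G) (Apt H G r) (M.obj ⟨r⟩) (stabRep M r) →ₗ[R] ⨁ u : U, M.obj ⟨u⟩ :=
  Submodule.liftQ _ (phiT M r) (phiT_ker M r)

lemma PhiComp_gen (r : U) (γ : H × G) (c : R) (m : M.obj ⟨r⟩) :
    PhiComp M r (Ind.gen R (H × G) (Apt H G r) (M.obj ⟨r⟩) (stabRep M r) γ c m) =
      c • DirectSum.lof R U (fun u => M.obj ⟨u⟩) (pact γ r) (M.map (homOf γ rfl) m) := by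
  have h1 := Submodule.liftQ_apply
    (indRel R (H × G) (Apt H G r) (M.obj ⟨r⟩) (stabRep M r)) (f := phiT M r)
    (MonoidAlgebra.single γ c ⊗ₜ[R] m) (h := phiT_ker M r)
  rw [phiT_single] at h1
  exact h1

noncomputable def Phi :
    (⨁ r : reps, Ind R (H × G) (Apt H G (r : U)) (M.obj ⟨(r : U)⟩) (stabRep M (r : U)))
      →ₗ[R] ⨁ u : U, M.obj ⟨u⟩ :=
  DirectSum.toModule R reps _ fun r => PhiComp M (r : U)

lemma Phi_lof (r : reps) (x : Ind R (H × G) (Apt H G (r : U)) (M.obj ⟨(r : U)⟩) (stabRep M (r : U))) :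
    Phi M reps (DirectSum.lof R reps _ r x) = PhiComp M (r : U) x := by
  unfold Phi
  rw [DirectSum.toModule_lof]

variable (repf : U → U) (qf : U → H × G) (hmem : ∀ u, repf u ∈ reps)
  (hq : ∀ u, pact (qf u) u = repf u)

/-- The component of `Ψ` at `u`. -/
noncomputable def PsiComp (u : U) :
    M.obj ⟨u⟩ →ₗ[R]
      ⨁ r : reps, Ind R (H × G) (Apt H G (r : U)) (M.obj ⟨(r : U)⟩) (stabRep M (r : U)) :=
  (DirectSum.lof R reps
      (fun r => Ind R (H × G) (Apt H G (r : U)) (M.obj ⟨(r : U)⟩) (stabRep M (r : U)))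
      ⟨repf u, hmem u⟩).comp
    ((genMap R (Apt H G (repf u)) (M.obj ⟨repf u⟩) (stabRep M (repf u)) ((qf u)⁻¹)).comp
      (ModuleCat.Hom.hom (M.map (homOf (qf u) (hq u))) : M.obj ⟨u⟩ →ₗ[R] M.obj ⟨repf u⟩))

noncomputable def Psi :
    (⨁ u : U, M.obj ⟨u⟩) →ₗ[R]
      ⨁ r : reps, Ind R (H × G) (Apt H G (r : U)) (M.obj ⟨(r : U)⟩) (stabRep M (r : U)) :=
  DirectSum.toModule R U _ fun u => PsiComp M reps repf qf hmem hq u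

lemma Psi_lof (u : U) (m : M.obj ⟨u⟩) :
    Psi M reps repf qf hmem hq (DirectSum.lof R U (fun u => M.obj ⟨u⟩) u m) =
      DirectSum.lof R reps
        (fun r => Ind R (H × G) (Apt H G (r : U)) (M.obj ⟨(r : U)⟩) (stabRep M (r : U)))
        ⟨repf u, hmem u⟩
        (Ind.gen R (H × G) (Apt H G (repf u)) (M.obj ⟨repf u⟩) (stabRep M (repf u))
          ((qf u)⁻¹) 1 (M.map (homOf (qf u) (hq u)) m)) := by
  unfold Psi
  rw [DirectSum.toModule_lof]
  rfl

end PhiPsi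
/-- `Σ(M) = ⨁_{u ∈ U} M(u)` is an `(RH,RG)`-bimodule (i.e. an `R(H×G)`-module, with
`(h,g) • m = M(h,g)(m)` landing in `M(h•u•g⁻¹)` for `m ∈ M(u)`), and as such it is
isomorphic to `⨁_{r ∈ [H\U/G]} Ind_{A(r)}^{H×G} M(r)`. -/
theorem sigma_iso_directSum_ind {H G U : Type u} [Group H] [Group G]
    [Finite H] [Finite G] [Finite U] [DecidableEq U]
    [MulAction H U] [MulAction Gᵐᵒᵖ U] [SMulCommClass H Gᵐᵒᵖ U]
    (M : BisetCat H G U ⥤ ModuleCat.{u} R)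
    (reps : Set U) [DecidableEq reps]
    (hreps : ∀ u : U, ∃! r : U, r ∈ reps ∧ ∃ (h : H) (g : G), h • (op g • u) = r) :
    ∃ ρS : (H × G) →* Module.End R (⨁ u : U, M.obj ⟨u⟩),
      (∀ (h : H) (g : G) (u : U) (m : M.obj ⟨u⟩),
        ρS (h, g) (DirectSum.lof R U (fun u => M.obj ⟨u⟩) u m) =
          DirectSum.lof R U (fun u => M.obj ⟨u⟩) ((op g⁻¹ : Gᵐᵒᵖ) • h • u)
            (M.map (⟨(h, g), smul_aux h g u⟩ :
              (⟨u⟩ : BisetCat H G U) ⟶ ⟨(op g⁻¹ : Gᵐᵒᵖ) • h • u⟩) m)) ∧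
      ∃ ρI : ∀ r : reps,
          (H × G) →* Module.End R (Ind R (H × G) (Apt H G (r : U)) (M.obj ⟨(r : U)⟩)
            (stabRep M (r : U))),
        (∀ (r : reps) (p p' : H × G) (c : R) (m : M.obj ⟨(r : U)⟩),
          ρI r p (Ind.gen R (H × G) (Apt H G (r : U)) _ (stabRep M (r : U)) p' c m) =
            Ind.gen R (H × G) (Apt H G (r : U)) _ (stabRep M (r : U)) (p * p') c m) ∧
        ∃ ρD : (H × G) →* Module.End R
            (⨁ r : reps, Ind R (H × G) (Apt H G (r : U)) (M.obj ⟨(r : U)⟩)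
              (stabRep M (r : U))),
          (∀ (p : H × G) (r : reps) x, ρD p (DirectSum.lof R reps _ r x) =
            DirectSum.lof R reps _ r (ρI r p x)) ∧
          ∃ e : (⨁ u : U, M.obj ⟨u⟩) ≃ₗ[R]
              (⨁ r : reps, Ind R (H × G) (Apt H G (r : U)) (M.obj ⟨(r : U)⟩)
                (stabRep M (r : U))),
            ∀ (p : H × G) x, e (ρS p x) = ρD p (e x) := by
  classical
  -- choice of representative data
  have hex : ∀ u : U, ∃ rq : U × (H × G), rq.1 ∈ reps ∧ pact rq.2 u = rq.1 := by
    intro u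
    obtain ⟨r, ⟨hr, h, g, hg⟩, -⟩ := hreps u
    refine ⟨(r, (h, g⁻¹)), hr, ?_⟩
    show (op (g⁻¹)⁻¹ : Gᵐᵒᵖ) • h • u = r
    rw [inv_inv, ← hg]
    exact (smul_comm _ _ _).symm
  choose rq hmem0 hq0 using hex
  set repf : U → U := fun u => (rq u).1 with hrepf
  set qf : U → H × G := fun u => (rq u).2 with hqf
  have huniq : ∀ (u r' : U), r' ∈ reps → (∃ p : H × G, pact p u = r') → r' = repf u := by
    rintro u r' hr' ⟨p, hp⟩
    obtain ⟨r0, -, hun⟩ := hreps u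
    have e1 : r' = r0 := hun r' ⟨hr', p.1, p.2⁻¹, by rw [smul_comm]; exact hp⟩
    have e2 : repf u = r0 := hun (repf u)
      ⟨hmem0 u, (qf u).1, (qf u).2⁻¹, by rw [smul_comm]; exact hq0 u⟩
    rw [e1, e2]
  have repf_pact : ∀ (p : H × G) (u : U), repf (pact p u) = repf u := by
    intro p u
    exact (huniq (pact p u) (repf u) (hmem0 u)
      ⟨qf u * p⁻¹, by rw [pact_mul, pact_inv_eq rfl]; exact hq0 u⟩).symm
  have repf_self : ∀ r : U, r ∈ reps → repf r = r := fun r hr =>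
    (huniq r r hr ⟨1, pact_one r⟩).symm
  -- the maps
  set ρI : ∀ r : reps,
      (H × G) →* Module.End R (Ind R (H × G) (Apt H G (r : U)) (M.obj ⟨(r : U)⟩)
        (stabRep M (r : U))) :=
    fun r => rhoI R (Apt H G (r : U)) (M.obj ⟨(r : U)⟩) (stabRep M (r : U)) with hρI
  set ΨL := Psi M reps repf qf hmem0 hq0 with hΨL
  set ΦL := Phi M reps with hΦL
  -- intertwining at the element level
  have hA : ∀ (p : H × G) (u : U) (m : M.obj ⟨u⟩),
      ΨL (rhoS M p (DirectSum.lof R U (fun u => M.obj ⟨u⟩) u m)) =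
      rhoD _ ρI p (ΨL (DirectSum.lof R U (fun u => M.obj ⟨u⟩) u m)) := by
    intro p u m
    rw [rhoS_lof, hΨL, Psi_lof, Psi_lof, rhoD_lof, hρI, rhoI_gen,
      show M.map (homOf (qf (pact p u)) (hq0 (pact p u)))
          (M.map (homOf p rfl : (⟨u⟩ : BisetCat H G U) ⟶ ⟨pact p u⟩) m)
        = M.map ((homOf p rfl : (⟨u⟩ : BisetCat H G U) ⟶ ⟨pact p u⟩) ≫
            homOf (qf (pact p u)) (hq0 (pact p u))) m from by rw [M.map_comp]; rfl,
      homOf_comp]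
    refine psiGenEq M reps (hmem0 (pact p u)) (hmem0 u) (repf_pact p u) _ _ _ _ 1 ?_ m
    rw [homOf_val, homOf_val, inv_mul_cancel_left, inv_mul_cancel_right]
  -- Phi ∘ Psi = id
  have hB : ∀ (u : U) (m : M.obj ⟨u⟩),
      ΦL (ΨL (DirectSum.lof R U (fun u => M.obj ⟨u⟩) u m)) =
        DirectSum.lof R U (fun u => M.obj ⟨u⟩) u m := by
    intro u m
    rw [hΨL, Psi_lof, hΦL, Phi_lof, PhiComp_gen, one_smul,
      show M.map (homOf ((qf u)⁻¹) rfl : (⟨repf u⟩ : BisetCat H G U) ⟶ _)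
          (M.map (homOf (qf u) (hq0 u)) m)
        = M.map (homOf (qf u) (hq0 u) ≫
            (homOf ((qf u)⁻¹) rfl : (⟨repf u⟩ : BisetCat H G U) ⟶ _)) m from by
          rw [M.map_comp]; rfl,
      homOf_comp]
    refine (lof_map_congr M _ (homOf 1 (pact_one u)) (pact_inv_eq (hq0 u)) ?_ m).trans ?_
    · rw [homOf_val, homOf_val, inv_mul_cancel]
    · rw [homOf_one, M.map_id]
      rfl
  -- Psi ∘ Phi = id at the element level
  have hC : ∀ (r : reps) (γ : H × G) (c : R) (m : M.obj ⟨(r : U)⟩),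
      ΨL (ΦL (DirectSum.lof R reps
        (fun r => Ind R (H × G) (Apt H G (r : U)) (M.obj ⟨(r : U)⟩) (stabRep M (r : U))) r
        (Ind.gen R (H × G) (Apt H G (r : U)) _ (stabRep M (r : U)) γ c m))) =
      DirectSum.lof R reps
        (fun r => Ind R (H × G) (Apt H G (r : U)) (M.obj ⟨(r : U)⟩) (stabRep M (r : U))) r
        (Ind.gen R (H × G) (Apt H G (r : U)) _ (stabRep M (r : U)) γ c m) := by
    intro r γ c m
    rw [hΦL, Phi_lof, PhiComp_gen, hΨL, map_smul, Psi_lof,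
      show M.map (homOf (qf (pact γ (r : U))) (hq0 (pact γ (r : U))))
          (M.map (homOf γ rfl : (⟨(r : U)⟩ : BisetCat H G U) ⟶ _) m)
        = M.map ((homOf γ rfl : (⟨(r : U)⟩ : BisetCat H G U) ⟶ _) ≫
            homOf (qf (pact γ (r : U))) (hq0 (pact γ (r : U)))) m from by
          rw [M.map_comp]; rfl,
      homOf_comp, ← map_smul, ← gen_smul]
    have hrr : repf (pact γ (r : U)) = (r : U) := by
      rw [repf_pact, repf_self _ r.2]
    refine (psiGenEq M reps (hmem0 (pact γ (r : U))) r.2 hrr _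
      (homOf 1 (pact_one (r : U))) _ γ c ?_ m).trans ?_
    · rw [homOf_val, homOf_val, inv_mul_cancel_left, mul_one]
    · rw [homOf_one, M.map_id]
      rfl
  -- package
  refine ⟨rhoS M, ?_, ρI, ?_, rhoD _ ρI, ?_,
    LinearEquiv.ofLinear ΨL ΦL ?_ ?_, ?_⟩
  · intro h g u m
    exact rhoS_lof M (h, g) u m
  · intro r p p' c m
    exact rhoI_gen R (Apt H G (r : U)) (M.obj ⟨(r : U)⟩) (stabRep M (r : U)) p p' c m
  · intro p r x
    exact rhoD_lof _ ρI p r x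
  · -- ΨL ∘ ΦL = id
    apply DirectSum.linearMap_ext
    intro r
    apply Submodule.linearMap_qext
    ext γ m
    exact DFunLike.congr_fun (hC r γ 1 m) _
  · -- ΦL ∘ ΨL = id
    apply DirectSum.linearMap_ext
    intro u
    refine LinearMap.ext fun m => ?_
    exact hB u m
  · intro p x
    induction x using DirectSum.induction_on with
    | zero => simp
    | of u m =>
        rw [LinearEquiv.ofLinear_apply, LinearEquiv.ofLinear_apply]
        exact hA p u m
    | add a b ha hb =>
        rw [map_add, map_add, map_add, map_add, ha, hb]
end

section
/- Let $G$, $H$, $K$ be groups, $X \leq H \times G$, $Y \leq K \times H$, $t \in H$, and consider the element $w = (\,(1,1)Y,\; {}_H\, (t,1)X\,)$ of the $(K,G)$-biset $V \times_H U$, where $V = (K\times H)/Y$ and $U = (H\times G)/X$. Then the stabilizer $A(w) = \{(k,g) \in K \times G \mid k w = w g\}$ equals $Y * {}^{(t,1)}X = \{(k,g) \mid \exists h \in H, (k,h) \in Y, (t^{-1}ht, g) \in X\}$. -/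
variable {G H K : Type*} [Group G] [Group H] [Group K]

/-- The star (composition) product `Y * ⁽ᵗ'¹⁾X` of subgroups `Y ≤ K × H`, `X ≤ H × G`. -/
def starSubgroup (X : Subgroup (H × G)) (Y : Subgroup (K × H)) (t : H) :
    Subgroup (K × G) where
  carrier := {p : K × G | ∃ h : H, (p.1, h) ∈ Y ∧ (t⁻¹ * h * t, p.2) ∈ X}
  one_mem' := ⟨1, by exact Y.one_mem, by simp only [mul_one, inv_mul_cancel]; exact X.one_mem⟩
  mul_mem' := by
    rintro a b ⟨h, hY, hX⟩ ⟨h', hY', hX'⟩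
    refine ⟨h * h', ?_, ?_⟩
    · exact Y.mul_mem hY hY'
    · have : ((t⁻¹ * (h * h') * t : H), (a.2 * b.2 : G)) =
        ((t⁻¹ * h * t, a.2) : H × G) * (t⁻¹ * h' * t, b.2) := by
        ext <;> simp <;> group
      rw [show ((a * b : K × G).2) = a.2 * b.2 from rfl, this]
      exact X.mul_mem hX hX'
  inv_mem' := by
    rintro a ⟨h, hY, hX⟩
    refine ⟨h⁻¹, ?_, ?_⟩
    · have : ((a.1⁻¹ : K), h⁻¹) = ((a.1, h) : K × H)⁻¹ := rfl
      rw [show ((a⁻¹ : K × G).1) = a.1⁻¹ from rfl, this]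
      exact Y.inv_mem hY
    · have : ((t⁻¹ * h⁻¹ * t : H), (a.2⁻¹ : G)) = ((t⁻¹ * h * t, a.2) : H × G)⁻¹ := by
        ext <;> simp <;> group
      rw [show ((a⁻¹ : K × G).2) = a.2⁻¹ from rfl, this]
      exact X.inv_mem hX

/-- The relation on `V × U` whose quotient is `V ×_H U`: `(v,u) ∼ (v·h, h⁻¹·u)`.
Here `V = (K×H)/Y` and `U = (H×G)/X`, with right `H`-action `v·h = (1,h⁻¹)•v` and
left `H`-action `h•u = (h,1)•u`. -/
def prodRel (X : Subgroup (H × G)) (Y : Subgroup (K × H))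
    (p q : ((K × H) ⧸ Y) × ((H × G) ⧸ X)) : Prop :=
  ∃ h : H, q = ((((1 : K), h⁻¹) : K × H) • p.1, ((h⁻¹, (1 : G)) : H × G) • p.2)


lemma prodRel_equivalence (X : Subgroup (H × G)) (Y : Subgroup (K × H)) :
    Equivalence (prodRel X Y) := by
  constructor
  · intro p; exact ⟨1, by simp [Prod.mk_one_one]⟩
  · rintro p q ⟨h, rfl⟩
    refine ⟨h⁻¹, ?_⟩
    simp [smul_smul, Prod.ext_iff, Prod.mk_one_one]
  · rintro p q r ⟨h, rfl⟩ ⟨h', rfl⟩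
    refine ⟨h * h', ?_⟩
    simp [smul_smul, Prod.ext_iff, mul_assoc]

/-- The stabilizer of the point `w = ((1,1)Y, (t,1)X)` of the `(K,G)`-biset
`((K×H)/Y) ×_H ((H×G)/X)` is exactly the subgroup `Y * ⁽ᵗ'¹⁾X`. -/
theorem stabilizer_of_point_in_product (X : Subgroup (H × G)) (Y : Subgroup (K × H)) (t : H) :
    {p : K × G |
        Quot.mk (prodRel X Y)
          (((((p.1, (1:H)) : K × H) : K × H) : (K × H) ⧸ Y),
            (((t, (1:G)) : H × G) : (H × G) ⧸ X)) =
        Quot.mk (prodRel X Y)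
          (((1 : K × H) : (K × H) ⧸ Y),
            ((((((1:H), p.2⁻¹) : H × G) * ((t, (1:G)) : H × G)) : H × G) : (H × G) ⧸ X))} =
      (starSubgroup X Y t : Set (K × G)) := by
  ext p
  simp only [Set.mem_setOf_eq, SetLike.mem_coe]
  rw [Quot.eq, Equivalence.eqvGen_iff (prodRel_equivalence X Y)]
  constructor
  · rintro ⟨h, hp⟩
    have h1 := congrArg Prod.fst hp
    have h2 := congrArg Prod.snd hp
    simp only [MulAction.Quotient.smul_mk, smul_eq_mul] at h1 h2
    refine ⟨h⁻¹, ?_, ?_⟩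
    · have := QuotientGroup.eq.mp h1.symm
      simpa [Prod.ext_iff] using Y.inv_mem this
    · have := QuotientGroup.eq.mp h2
      simpa [Prod.ext_iff, mul_assoc] using this
  · rintro ⟨h, hY, hX⟩
    refine ⟨h⁻¹, ?_⟩
    refine Prod.ext ?_ ?_
    · show ((1 : K × H) : (K × H) ⧸ Y) = _
      simp only [MulAction.Quotient.smul_mk, smul_eq_mul]
      exact (QuotientGroup.eq.mpr (by simpa [Prod.ext_iff] using Y.inv_mem hY)).symm
    · simp only [MulAction.Quotient.smul_mk, smul_eq_mul]
      exact QuotientGroup.eq.mpr (by simpa [Prod.ext_iff, mul_assoc] using hX)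
end

section
/- Let $G$, $H$, $K$ be groups, $X \leq H \times G$, $Y \leq K \times H$, $U = (H\times G)/X$ and $V = (K\times H)/Y$ as bisets. The map sending the double coset $p_2(Y)\, t\, p_1(X)$ to the $(K,G)$-orbit of $((1,1)Y, {}_H (t,1)X)$ in $V \times_H U$ is a well-defined bijection from the set of double cosets $p_2(Y)\backslash H / p_1(X)$ to the set of $(K,G)$-orbits of $V \times_H U$. -/
variable {G H K : Type*} [Group G] [Group H] [Group K]

/-- The action of `(k,g) ∈ K × G` on the biset `((K×H)/Y) ×_H ((H×G)/X)`. -/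
def kgAct (X : Subgroup (H × G)) (Y : Subgroup (K × H)) (k : K) (g : G) :
    Quot (prodRel X Y) → Quot (prodRel X Y) :=
  Quot.map (fun p => ((((k, (1:H)) : K × H) • p.1, ((((1:H), g⁻¹) : H × G)) • p.2)))
    (by
      rintro ⟨v, u⟩ q ⟨h, rfl⟩
      refine ⟨h, ?_⟩
      simp only [smul_smul]
      refine Prod.ext ?_ ?_ <;> · dsimp; congr 1; ext <;> simp)

namespace DosetEquivAux

variable (X : Subgroup (H × G)) (Y : Subgroup (K × H))

/-- The orbit relation. -/
abbrev OrbRel : Quot (prodRel X Y) → Quot (prodRel X Y) → Prop :=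
  fun x x' => ∃ (k : K) (g : G), kgAct X Y k g x = x'

/-- A basic element of the tensor product. -/
abbrev elt (a : K) (b c : H) (g : G) : Quot (prodRel X Y) :=
  Quot.mk _ ((((a, b) : K × H) : (K × H) ⧸ Y), (((c, g) : H × G) : (H × G) ⧸ X))

lemma elt_eq {a a' : K} {b b' c c' : H} {g g' : G}
    (hv : ((a, b) : K × H)⁻¹ * (a', b') ∈ Y) (hu : ((c, g) : H × G)⁻¹ * (c', g') ∈ X) :
    elt X Y a b c g = elt X Y a' b' c' g' := by
  unfold elt
  congr 1
  refine Prod.ext ?_ ?_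
  · exact QuotientGroup.eq.mpr hv
  · exact QuotientGroup.eq.mpr hu

lemma elt_kgAct (k : K) (g : G) (a : K) (b c : H) (g' : G) :
    kgAct X Y k g (elt X Y a b c g') = elt X Y (k * a) b c (g⁻¹ * g') := by
  show Quot.mk _ _ = _
  unfold elt
  congr 1
  refine Prod.ext ?_ ?_
  · show (((k, (1:H)) : K × H) • (((a, b) : K × H) : (K × H) ⧸ Y)) = _
    rw [MulAction.Quotient.smul_mk]
    congr 1
    ext <;> simp
  · show ((((1:H), g⁻¹) : H × G) • (((c, g') : H × G) : (H × G) ⧸ X)) = _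
    rw [MulAction.Quotient.smul_mk]
    congr 1
    ext <;> simp

lemma elt_rel (h : H) (a : K) (b c : H) (g' : G) :
    elt X Y a b c g' = elt X Y a (h⁻¹ * b) (h⁻¹ * c) g' := by
  refine Quot.sound ⟨h, ?_⟩
  refine Prod.ext ?_ ?_
  · show (((a, h⁻¹ * b) : K × H) : (K × H) ⧸ Y) =
      (((1 : K), h⁻¹) : K × H) • (((a, b) : K × H) : (K × H) ⧸ Y)
    rw [MulAction.Quotient.smul_mk]
    congr 1
    ext <;> simp
  · show (((h⁻¹ * c, g') : H × G) : (H × G) ⧸ X) =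
      ((h⁻¹, (1 : G)) : H × G) • (((c, g') : H × G) : (H × G) ⧸ X)
    rw [MulAction.Quotient.smul_mk]
    congr 1
    ext <;> simp

/-- The normal form of the orbit of a basic element. -/
lemma elt_orbit (a : K) (b c : H) (g' : G) :
    Quot.mk (OrbRel X Y) (elt X Y a b c g') = Quot.mk _ (elt X Y 1 1 (b⁻¹ * c) 1) := by
  have h1 : Quot.mk (OrbRel X Y) (elt X Y a b c g') = Quot.mk _ (elt X Y 1 b c 1) := by
    refine Quot.sound ⟨a⁻¹, g', ?_⟩
    rw [elt_kgAct]
    simp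
  rw [h1, elt_rel X Y b 1 b c 1]
  simp

/-- The inverse map, on representatives. -/
def toDosetAux : ((K × H) ⧸ Y) → ((H × G) ⧸ X) →
    DoubleCoset.Quotient (↑(Y.map (MonoidHom.snd K H)) : Set H)
      (↑(X.map (MonoidHom.fst H G)) : Set H) := fun v u =>
  Quotient.liftOn₂ v u
    (fun v u => DoubleCoset.mk (Y.map (MonoidHom.snd K H)) (X.map (MonoidHom.fst H G)) (v.2⁻¹ * u.1))
    (by
      intro v u v' u' hv hu
      replace hv : v⁻¹ * v' ∈ Y := QuotientGroup.leftRel_apply.mp hv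
      replace hu : u⁻¹ * u' ∈ X := QuotientGroup.leftRel_apply.mp hu
      rw [DoubleCoset.eq]
      refine ⟨(v'.2⁻¹ * v.2 : H), ?_, (u.1⁻¹ * u'.1 : H), ?_, by group⟩
      · have : ((v⁻¹ * v' : K × H)⁻¹) ∈ Y := Y.inv_mem hv
        exact ⟨(v⁻¹ * v')⁻¹, this, by simp [Prod.snd_mul, mul_comm]⟩
      · exact ⟨u⁻¹ * u', hu, rfl⟩)

lemma toDosetAux_mk (a : K) (b c : H) (g : G) :
    toDosetAux X Y (((a, b) : K × H) : (K × H) ⧸ Y) (((c, g) : H × G) : (H × G) ⧸ X) =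
      DoubleCoset.mk (Y.map (MonoidHom.snd K H)) (X.map (MonoidHom.fst H G)) (b⁻¹ * c) := rfl

/-- The inverse map on the inner quotient. -/
def toDosetInner : Quot (prodRel X Y) →
    DoubleCoset.Quotient (↑(Y.map (MonoidHom.snd K H)) : Set H)
      (↑(X.map (MonoidHom.fst H G)) : Set H) :=
  Quot.lift (fun p => toDosetAux X Y p.1 p.2)
      (by
        rintro ⟨v, u⟩ q ⟨h, rfl⟩
        induction v using Quotient.inductionOn with | h v =>
        induction u using Quotient.inductionOn with | h u =>
        obtain ⟨a, b⟩ := v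
        obtain ⟨c, g⟩ := u
        show toDosetAux X Y _ _ = toDosetAux X Y
          ((((1 : K), h⁻¹) : K × H) • (((a, b) : K × H) : (K × H) ⧸ Y))
          (((h⁻¹, (1 : G)) : H × G) • (((c, g) : H × G) : (H × G) ⧸ X))
        rw [MulAction.Quotient.smul_mk, MulAction.Quotient.smul_mk]
        show _ = toDosetAux X Y (((1 * a, h⁻¹ * b) : K × H) : (K × H) ⧸ Y)
          (((h⁻¹ * c, 1 * g) : H × G) : (H × G) ⧸ X)
        rw [toDosetAux_mk, toDosetAux_mk]
        congr 1
        group)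

lemma toDosetInner_elt (a : K) (b c : H) (g : G) :
    toDosetInner X Y (elt X Y a b c g) =
      DoubleCoset.mk (Y.map (MonoidHom.snd K H)) (X.map (MonoidHom.fst H G)) (b⁻¹ * c) := rfl

/-- The inverse map. -/
def toDoset : Quot (OrbRel X Y) →
    DoubleCoset.Quotient (↑(Y.map (MonoidHom.snd K H)) : Set H)
      (↑(X.map (MonoidHom.fst H G)) : Set H) :=
  Quot.lift (toDosetInner X Y)
    (by
      rintro x y ⟨k, g, rfl⟩
      induction x using Quot.inductionOn with | h p =>
      obtain ⟨v, u⟩ := p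
      induction v using Quotient.inductionOn with | h v =>
      induction u using Quotient.inductionOn with | h u =>
      obtain ⟨a, b⟩ := v
      obtain ⟨c, g'⟩ := u
      show toDosetInner X Y (elt X Y a b c g') =
        toDosetInner X Y (kgAct X Y k g (elt X Y a b c g'))
      rw [elt_kgAct, toDosetInner_elt, toDosetInner_elt])

end DosetEquivAux

open DosetEquivAux in
/-- The map sending the double coset `p₂(Y) t p₁(X)` to the `(K,G)`-orbit of
`((1,1)Y, (t,1)X)` is a well-defined bijection from `p₂(Y)\H/p₁(X)` to the set of
`(K,G)`-orbits of `((K×H)/Y) ×_H ((H×G)/X)`. -/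
theorem doset_equiv_orbits (X : Subgroup (H × G)) (Y : Subgroup (K × H)) :
    ∃ e : DoubleCoset.Quotient (↑(Y.map (MonoidHom.snd K H)) : Set H)
        (↑(X.map (MonoidHom.fst H G)) : Set H) ≃
        Quot (fun x x' : Quot (prodRel X Y) => ∃ (k : K) (g : G), kgAct X Y k g x = x'),
      ∀ t : H,
        e (DoubleCoset.mk (Y.map (MonoidHom.snd K H)) (X.map (MonoidHom.fst H G)) t) =
          Quot.mk _ (Quot.mk _ (((1 : K × H) : (K × H) ⧸ Y),
            (((t, (1:G)) : H × G) : (H × G) ⧸ X))) := by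
  classical
  refine ⟨⟨Quotient.lift (fun t => Quot.mk (OrbRel X Y) (elt X Y 1 1 t 1)) ?_,
    toDoset X Y, ?_, ?_⟩, fun t => rfl⟩
  · -- well-definedness of the forward map
    intro t t' htt'
    obtain ⟨h, hh, k, hk, rfl⟩ := DoubleCoset.rel_iff.mp htt'
    obtain ⟨y, hy, rfl⟩ := hh
    obtain ⟨x, hx, rfl⟩ := hk
    have e1 : elt X Y 1 1 t 1 = elt X Y y.1⁻¹ y.2⁻¹ (t * x.1) x.2 := by
      refine elt_eq X Y ?_ ?_
      · have : ((1, 1) : K × H)⁻¹ * (y.1⁻¹, y.2⁻¹) = y⁻¹ := by ext <;> simp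
        rw [this]; exact Y.inv_mem hy
      · have : ((t, 1) : H × G)⁻¹ * (t * x.1, x.2) = x := by ext <;> simp
        rw [this]; exact hx
    show Quot.mk (OrbRel X Y) (elt X Y 1 1 t 1) =
      Quot.mk (OrbRel X Y) (elt X Y 1 1 (y.2 * t * x.1) 1)
    rw [e1, elt_orbit, elt_orbit]
    simp [mul_assoc]
  · -- left inverse
    intro q
    induction q using Quotient.inductionOn with | h t =>
    show toDoset X Y (Quot.mk (OrbRel X Y) (elt X Y 1 1 t 1)) = _
    show DoubleCoset.mk (Y.map (MonoidHom.snd K H)) (X.map (MonoidHom.fst H G)) ((1 : H)⁻¹ * t) = _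
    rw [inv_one, one_mul]
  · -- right inverse
    intro q
    induction q using Quot.inductionOn with | h p =>
    induction p using Quot.inductionOn with | h p =>
    obtain ⟨v, u⟩ := p
    induction v using Quotient.inductionOn with | h v =>
    induction u using Quotient.inductionOn with | h u =>
    obtain ⟨a, b⟩ := v
    obtain ⟨c, g⟩ := u
    show Quot.mk (OrbRel X Y) (elt X Y 1 1 (b⁻¹ * c) 1) = Quot.mk (OrbRel X Y) (elt X Y a b c g)
    exact (elt_orbit X Y a b c g).symm
end
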